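/- For any Θ ∈ Der_R(A, A⊗A) and any ordinary derivation ξ ∈ Der_R(A), the reduced contraction ι_Θ and the contraction i_ξ anticommute: (i_ξ∘ι_Θ + ι_Θ∘i_ξ)(ω) = 0 in Ω^{n-2}_R A for every ω ∈ DR^n_R A. -/

import Mathlib

open TensorProduct

/-- For any double derivation `Θ ∈ Der_R(A, A ⊗ A)` and any ordinary
derivation `ξ ∈ Der_R(A)`, the reduced contraction `ι_Θ` and the contraction `i_ξ`
anticommute: `(i_ξ ∘ ι_Θ + ι_Θ ∘ i_ξ)(ω) = 0` in `Ω^{n-2}_R A` for every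
`ω ∈ DR^n_R A` (both operations descend to the Karoubi–de Rham complex, so this
is stated on all of `Ω•_R A`). -/
theorem stmt13 (k R A W : Type*) [Field k] [CharZero k]
    [Ring R] [Algebra k R] [FiniteDimensional k R] [IsSemisimpleRing R]
    [Ring A] [Algebra k A] (f : R →ₐ[k] A)
    [Ring W] [Algebra k W]
    (𝒜 : ℕ → Submodule k W) [GradedAlgebra 𝒜]
    (ιA : A →ₐ[k] W) (d σ : W →ₗ[k] W)
    (hι0 : ∀ a : A, ιA a ∈ 𝒜 0)
    (hdg : ∀ (n : ℕ), ∀ w ∈ 𝒜 n, d w ∈ 𝒜 (n + 1))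
    (hσ : ∀ (n : ℕ), ∀ w ∈ 𝒜 n, σ w = ((-1 : k) ^ n) • w)
    (hdd : ∀ w : W, d (d w) = 0)
    (hdLeib : ∀ x y : W, d (x * y) = d x * y + σ x * d y)
    (hdR : ∀ r : R, d (ιA (f r)) = 0)
    (hgen : Algebra.adjoin k
        (Set.range (fun a : A => ιA a) ∪ Set.range (fun a : A => d (ιA a))) = ⊤)
    (dia : W ⊗[k] W →ₗ[k] W)
    (hdia : ∀ (p q : ℕ), ∀ x ∈ 𝒜 p, ∀ y ∈ 𝒜 q,
        dia (x ⊗ₜ[k] y) = ((-1 : k) ^ (p * q)) • (y * x))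
    -- the double derivation Θ and its contraction
    (Θ : A →ₗ[k] A ⊗[k] A)
    (hΘder : ∀ x y : A, Θ (x * y) = (x ⊗ₜ[k] (1 : A)) * Θ y + Θ x * ((1 : A) ⊗ₜ[k] y))
    (hΘR : ∀ r : R, Θ (f r) = 0)
    (iΘ : W →ₗ[k] W ⊗[k] W)
    (hiΘ0 : ∀ a : A, iΘ (ιA a) = 0)
    (hiΘd : ∀ a : A, iΘ (d (ιA a)) = TensorProduct.map ιA.toLinearMap ιA.toLinearMap (Θ a))
    (hiΘL : ∀ x y : W,
        iΘ (x * y) = iΘ x * ((1 : W) ⊗ₜ[k] y) + (σ x ⊗ₜ[k] (1 : W)) * iΘ y)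
    -- the ordinary derivation ξ and its contraction
    (ξ : A →ₗ[k] A)
    (hξder : ∀ x y : A, ξ (x * y) = x * ξ y + ξ x * y)
    (hξR : ∀ r : R, ξ (f r) = 0)
    (iξ : W →ₗ[k] W)
    (hiξ0 : ∀ a : A, iξ (ιA a) = 0)
    (hiξd : ∀ a : A, iξ (d (ιA a)) = ιA (ξ a))
    (hiξL : ∀ x y : W, iξ (x * y) = iξ x * y + σ x * iξ y) :
    iξ ∘ₗ (dia ∘ₗ iΘ) + (dia ∘ₗ iΘ) ∘ₗ iξ = 0 := by
  classical
  -- basic facts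
  have h1 : (1 : W) ∈ 𝒜 0 := by simpa using hι0 1
  have hσ1 : σ (1 : W) = 1 := by rw [hσ 0 1 h1, pow_zero, one_smul]
  have hiξ1 : iξ (1 : W) = 0 := by simpa using hiξ0 1
  have hσι : ∀ a : A, σ (ιA a) = ιA a := fun a => by
    rw [hσ 0 _ (hι0 a), pow_zero, one_smul]
  have hσd : ∀ a : A, σ (d (ιA a)) = -(d (ιA a)) := fun a => by
    rw [hσ 1 _ (hdg 0 _ (hι0 a)), pow_one, neg_one_smul]
  have hσhom : ∀ (n : ℕ) (w : W), w ∈ 𝒜 n → σ w ∈ 𝒜 n := by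
    intro n w hw; rw [hσ n w hw]; exact Submodule.smul_mem _ _ hw
  have hσσ : ∀ w : W, σ (σ w) = w := by
    intro w
    induction w using DirectSum.Decomposition.inductionOn 𝒜 with
    | zero => simp
    | homogeneous m =>
        rename_i i
        rw [hσ i _ m.2, map_smul, hσ i _ m.2, smul_smul, ← pow_add,
          Even.neg_one_pow ⟨i, rfl⟩, one_smul]
    | add m m' hm hm' => rw [map_add, map_add, hm, hm']
  have hσmul : ∀ x y : W, σ (x * y) = σ x * σ y := by
    intro x y
    induction x using DirectSum.Decomposition.inductionOn 𝒜 with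
    | zero => simp
    | homogeneous m =>
        rename_i i
        induction y using DirectSum.Decomposition.inductionOn 𝒜 with
        | zero => simp
        | homogeneous m' =>
            rename_i j
            rw [hσ (i + j) _ (SetLike.mul_mem_graded m.2 m'.2), hσ i _ m.2, hσ j _ m'.2,
              smul_mul_assoc, mul_smul_comm, smul_smul, ← pow_add]
        | add y₁ y₂ hy₁ hy₂ => rw [mul_add, map_add, hy₁, hy₂, map_add, mul_add]
    | add x₁ x₂ hx₁ hx₂ => rw [add_mul, map_add, hx₁, hx₂, map_add, add_mul]
  -- membership in the adjoin
  have hmemtop : ∀ w : W, w ∈ Algebra.adjoin k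
      ((Set.range fun a : A => ιA a) ∪ Set.range fun a : A => d (ιA a)) := by
    intro w; rw [hgen]; exact Algebra.mem_top
  -- iξ lowers degree by one
  have hP : ∀ w : W, iξ ((DirectSum.decompose 𝒜 w 0 : 𝒜 0) : W) = 0 ∧
      ∀ n : ℕ, iξ ((DirectSum.decompose 𝒜 w (n + 1) : 𝒜 (n + 1)) : W) ∈ 𝒜 n := by
    intro w
    have hι : ∀ a : A, iξ ((DirectSum.decompose 𝒜 (ιA a) 0 : 𝒜 0) : W) = 0 ∧
        ∀ n : ℕ, iξ ((DirectSum.decompose 𝒜 (ιA a) (n + 1) : 𝒜 (n + 1)) : W) ∈ 𝒜 n := by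
      intro a
      constructor
      · rw [DirectSum.decompose_of_mem_same 𝒜 (hι0 a), hiξ0]
      · intro n
        rw [DirectSum.decompose_of_mem_ne 𝒜 (hι0 a) (by omega : (0:ℕ) ≠ n + 1), map_zero]
        exact zero_mem _
    induction hmemtop w using Algebra.adjoin_induction with
    | mem x hx =>
        obtain ⟨a, rfl⟩ | ⟨a, rfl⟩ := hx
        · exact hι a
        · have hd : d (ιA a) ∈ 𝒜 1 := hdg 0 _ (hι0 a)
          constructor
          · rw [DirectSum.decompose_of_mem_ne 𝒜 hd one_ne_zero, map_zero]
          · intro n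
            cases n with
            | zero =>
                rw [DirectSum.decompose_of_mem_same 𝒜 hd, hiξd]
                exact hι0 _
            | succ m =>
                rw [DirectSum.decompose_of_mem_ne 𝒜 hd (by omega), map_zero]
                exact zero_mem _
    | algebraMap r => rw [← ιA.commutes r]; exact hι _
    | add x y hx hy ihx ihy =>
        constructor
        · rw [DirectSum.decompose_add, DirectSum.add_apply, Submodule.coe_add, map_add,
            ihx.1, ihy.1, add_zero]
        · intro n
          rw [DirectSum.decompose_add, DirectSum.add_apply, Submodule.coe_add, map_add]
          exact add_mem (ihx.2 n) (ihy.2 n)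
    | mul x y hx hy ihx ihy =>
        have hmc : ∀ m : ℕ, ((DirectSum.decompose 𝒜 (x * y) m : 𝒜 m) : W) =
            ∑ ij ∈ ((DirectSum.decompose 𝒜 x).support ×ˢ
                (DirectSum.decompose 𝒜 y).support).filter
                (fun ij : ℕ × ℕ => ij.1 + ij.2 = m),
              ((DirectSum.decompose 𝒜 x ij.1 : W) * (DirectSum.decompose 𝒜 y ij.2 : W)) := by
          intro m
          rw [DirectSum.decompose_mul]
          exact DirectSum.coe_mul_apply 𝒜 _ _ m
        constructor
        · rw [hmc 0, map_sum]
          apply Finset.sum_eq_zero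
          rintro ⟨i, j⟩ hij
          simp only [Finset.mem_filter] at hij
          obtain ⟨rfl, rfl⟩ : i = 0 ∧ j = 0 := by omega
          rw [hiξL, ihx.1, ihy.1, zero_mul, mul_zero, add_zero]
        · intro n
          rw [hmc (n + 1), map_sum]
          apply sum_mem
          rintro ⟨i, j⟩ hij
          simp only [Finset.mem_filter] at hij
          obtain ⟨-, hijn⟩ := hij
          rw [hiξL]
          rcases i with _ | i'
          · obtain rfl : j = n + 1 := by omega
            rw [ihx.1, zero_mul, zero_add]
            have := SetLike.mul_mem_graded
              (hσhom 0 _ (DirectSum.decompose 𝒜 x 0).2) (ihy.2 n)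
            simpa using this
          · rcases j with _ | j'
            · obtain rfl : i' = n := by omega
              rw [ihy.1, mul_zero, add_zero]
              have := SetLike.mul_mem_graded (ihx.2 i') (DirectSum.decompose 𝒜 y 0).2
              simpa using this
            · apply add_mem
              · have := SetLike.mul_mem_graded (ihx.2 i')
                  (DirectSum.decompose 𝒜 y (j' + 1)).2
                have he : i' + (j' + 1) = n := by omega
                rw [← he]; exact this
              · have := SetLike.mul_mem_graded
                  (hσhom _ _ (DirectSum.decompose 𝒜 x (i' + 1)).2) (ihy.2 j')
                have he : (i' + 1) + j' = n := by omega
                rw [← he]; exact this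
  have hiξz : ∀ w ∈ 𝒜 0, iξ w = 0 := fun w hw => by
    have := (hP w).1; rwa [DirectSum.decompose_of_mem_same 𝒜 hw] at this
  have hiξS : ∀ (n : ℕ), ∀ w ∈ 𝒜 (n + 1), iξ w ∈ 𝒜 n := fun n w hw => by
    have := (hP w).2 n; rwa [DirectSum.decompose_of_mem_same 𝒜 hw] at this
  -- σ and iξ anticommute
  have hσiξ : ∀ w : W, σ (iξ w) = - iξ (σ w) := by
    intro w
    induction hmemtop w using Algebra.adjoin_induction with
    | mem x hx =>
        obtain ⟨a, rfl⟩ | ⟨a, rfl⟩ := hx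
        · rw [hiξ0, map_zero, hσι, hiξ0, neg_zero]
        · rw [hiξd, hσι, hσd, map_neg, hiξd, neg_neg]
    | algebraMap r =>
        rw [← ιA.commutes r, hiξ0, map_zero, hσι, hiξ0, neg_zero]
    | add x y hx hy ihx ihy => rw [map_add, map_add, map_add, map_add, ihx, ihy, neg_add]
    | mul x y hx hy ihx ihy =>
        rw [hiξL x y, map_add, hσmul (iξ x) y, hσmul (σ x) (iξ y), ihx, ihy, hσσ x,
          hσmul x y, hiξL (σ x) (σ y), hσσ x]
        noncomm_ring
  -- the algebra map version of σ and the flip of iΘ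
  set σA : W →ₐ[k] W := AlgHom.ofLinearMap σ hσ1 hσmul with hσA
  have hσAapp : ∀ w : W, σA w = σ w := fun _ => rfl
  set Sg : W ⊗[k] W →ₐ[k] W ⊗[k] W := Algebra.TensorProduct.map σA σA with hSg
  have hSgtmul : ∀ u v : W, Sg (u ⊗ₜ[k] v) = σ u ⊗ₜ[k] σ v := fun u v => by
    rw [hSg, Algebra.TensorProduct.map_tmul, hσAapp, hσAapp]
  have hSgiΘ : ∀ w : W, Sg (iΘ w) = - iΘ (σ w) := by
    have haux : ∀ t : A ⊗[k] A,
        Sg (TensorProduct.map ιA.toLinearMap ιA.toLinearMap t) =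
          TensorProduct.map ιA.toLinearMap ιA.toLinearMap t := by
      intro t
      induction t using TensorProduct.induction_on with
      | zero => simp
      | tmul a b =>
          rw [TensorProduct.map_tmul]
          show Sg (ιA a ⊗ₜ[k] ιA b) = _
          rw [hSgtmul, hσι, hσι]; rfl
      | add t₁ t₂ h₁ h₂ => rw [map_add, map_add, h₁, h₂]
    intro w
    induction hmemtop w using Algebra.adjoin_induction with
    | mem x hx =>
        obtain ⟨a, rfl⟩ | ⟨a, rfl⟩ := hx
        · rw [hiΘ0, map_zero, hσι, hiΘ0, neg_zero]
        · rw [hiΘd, haux, hσd, map_neg, hiΘd, neg_neg]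
    | algebraMap r =>
        rw [← ιA.commutes r, hiΘ0, map_zero, hσι, hiΘ0, neg_zero]
    | add x y hx hy ihx ihy => rw [map_add, map_add, map_add, map_add, ihx, ihy, neg_add]
    | mul x y hx hy ihx ihy =>
        rw [hiΘL x y, map_add, map_mul, map_mul, ihx, hSgtmul, hSgtmul, hσσ x, hσ1,
          hσmul x y, hiΘL (σ x) (σ y), hσσ x, ihy]
        noncomm_ring
  -- the super-Leibniz rule for (σ ⊗ iξ) + (iξ ⊗ 1)
  have hDmul : ∀ u v : W ⊗[k] W,
      TensorProduct.map σ iξ (u * v) + TensorProduct.map iξ LinearMap.id (u * v) =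
        TensorProduct.map σ iξ u * TensorProduct.map σ LinearMap.id v +
        TensorProduct.map iξ LinearMap.id u * v +
        Sg u * TensorProduct.map σ iξ v +
        TensorProduct.map σ LinearMap.id u * TensorProduct.map iξ LinearMap.id v := by
    intro u v
    induction u using TensorProduct.induction_on with
    | zero => simp
    | add u₁ u₂ h₁ h₂ =>
        simp only [add_mul, map_add]
        refine Eq.trans ?_ ((congrArg₂ (· + ·) h₁ h₂).trans ?_) <;> abel
    | tmul a b =>
        induction v using TensorProduct.induction_on with
        | zero => simp
        | add v₁ v₂ h₁ h₂ =>
            simp only [mul_add, map_add]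
            refine Eq.trans ?_ ((congrArg₂ (· + ·) h₁ h₂).trans ?_) <;> abel
        | tmul c d =>
            simp only [Algebra.TensorProduct.tmul_mul_tmul, TensorProduct.map_tmul,
              LinearMap.id_coe, id_eq, hSgtmul, hσmul, hiξL, TensorProduct.tmul_add,
              TensorProduct.add_tmul]
            abel
  -- sign bookkeeping
  have hsgn : ∀ m n : ℕ, m % 2 = n % 2 → ((-1 : k) ^ m = (-1 : k) ^ n) := by
    intro m n h
    rw [← Nat.div_add_mod m 2, ← Nat.div_add_mod n 2, pow_add, pow_add, pow_mul, pow_mul,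
      neg_one_sq, one_pow, one_pow, one_mul, one_mul, h]
  -- the contraction iξ intertwines dia and (σ ⊗ iξ) + (iξ ⊗ 1)
  have hA : ∀ z : W ⊗[k] W, iξ (dia z) =
      dia (TensorProduct.map σ iξ z + TensorProduct.map iξ LinearMap.id z) := by
    intro z
    induction z using TensorProduct.induction_on with
    | zero => simp
    | add z₁ z₂ h₁ h₂ => simp only [map_add, h₁, h₂]; abel
    | tmul x y =>
        induction x using DirectSum.Decomposition.inductionOn 𝒜 with
        | zero => simp
        | add x₁ x₂ hx₁ hx₂ =>
            simp only [TensorProduct.add_tmul, map_add]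
            refine Eq.trans ?_ ((congrArg₂ (· + ·) hx₁ hx₂).trans ?_) <;>
              simp only [map_add] <;> abel
        | homogeneous mx =>
            rename_i p
            induction y using DirectSum.Decomposition.inductionOn 𝒜 with
            | zero => simp
            | add y₁ y₂ hy₁ hy₂ =>
                simp only [TensorProduct.tmul_add, map_add]
                refine Eq.trans ?_ ((congrArg₂ (· + ·) hy₁ hy₂).trans ?_) <;>
              simp only [map_add] <;> abel
            | homogeneous my =>
                rename_i q
                rw [TensorProduct.map_tmul, TensorProduct.map_tmul,
                  hdia p q _ mx.2 _ my.2, map_smul, hiξL (my : W) (mx : W)]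
                simp only [LinearMap.id_coe, id_eq]
                rcases q with _ | q'
                · rw [hiξz _ my.2, zero_mul, zero_add, tmul_zero, zero_add, hσ 0 _ my.2]
                  rcases p with _ | p'
                  · rw [hiξz _ mx.2]; simp
                  · rw [hdia p' 0 _ (hiξS p' _ mx.2) _ my.2]; simp
                · rw [hσ p _ mx.2, hσ (q' + 1) _ my.2]
                  rcases p with _ | p'
                  · rw [hiξz _ mx.2, mul_zero, add_zero, zero_tmul, add_zero]
                    simp only [Nat.zero_mul, pow_zero, one_smul]
                    rw [hdia 0 q' _ mx.2 _ (hiξS q' _ my.2)]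
                    simp
                  · rw [smul_mul_assoc, ← TensorProduct.smul_tmul', map_add, map_smul,
                      hdia (p' + 1) q' _ mx.2 _ (hiξS q' _ my.2),
                      hdia p' (q' + 1) _ (hiξS p' _ mx.2) _ my.2,
                      smul_add, smul_smul, smul_smul]
                    congr 1
                    · congr 1
                      rw [← pow_add]; congr 1; ring
                    · congr 1
                      rw [← pow_add]
                      apply hsgn
                      have h2 : (p' + 1) * (q' + 1) + (q' + 1) = p' * (q' + 1) + 2 * (q' + 1) := by
                        ring
                      rw [h2]
                      generalize p' * (q' + 1) = t
                      omega
  -- the main super-derivation identity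
  have hT : ∀ w : W,
      TensorProduct.map σ iξ (iΘ w) + TensorProduct.map iξ LinearMap.id (iΘ w) + iΘ (iξ w)
        = 0 := by
    have hgen0 : ∀ a : A,
        TensorProduct.map σ iξ (iΘ (ιA a)) + TensorProduct.map iξ LinearMap.id (iΘ (ιA a))
          + iΘ (iξ (ιA a)) = 0 := by
      intro a; rw [hiΘ0, hiξ0, map_zero, map_zero, map_zero]; simp
    have hmapι : ∀ t : A ⊗[k] A,
        TensorProduct.map σ iξ (TensorProduct.map ιA.toLinearMap ιA.toLinearMap t) = 0 ∧
        TensorProduct.map iξ LinearMap.id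
          (TensorProduct.map ιA.toLinearMap ιA.toLinearMap t) = 0 := by
      intro t
      induction t using TensorProduct.induction_on with
      | zero => simp
      | tmul a b => refine ⟨?_, ?_⟩ <;> simp [TensorProduct.map_tmul, hiξ0]
      | add t₁ t₂ h₁ h₂ =>
          exact ⟨by rw [map_add, map_add, h₁.1, h₂.1, add_zero],
            by rw [map_add, map_add, h₁.2, h₂.2, add_zero]⟩
    intro w
    induction hmemtop w using Algebra.adjoin_induction with
    | mem x hx =>
        obtain ⟨a, rfl⟩ | ⟨a, rfl⟩ := hx
        · exact hgen0 a
        · rw [hiΘd a, hiξd a, (hmapι (Θ a)).1, (hmapι (Θ a)).2, hiΘ0]; simp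
    | algebraMap r => rw [← ιA.commutes r]; exact hgen0 _
    | add x y hx hy ihx ihy =>
        simp only [map_add]
        have hxy : (TensorProduct.map σ iξ (iΘ x) + TensorProduct.map iξ LinearMap.id (iΘ x)
              + iΘ (iξ x))
            + (TensorProduct.map σ iξ (iΘ y) + TensorProduct.map iξ LinearMap.id (iΘ y)
              + iΘ (iξ y)) = 0 := by rw [ihx, ihy, add_zero]
        refine Eq.trans ?_ hxy
        abel
    | mul x y hx hy ihx ihy =>
        have e1 := hDmul (iΘ x) ((1 : W) ⊗ₜ[k] y)
        have e2 := hDmul ((σ x) ⊗ₜ[k] (1 : W)) (iΘ y)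
        simp only [TensorProduct.map_tmul, LinearMap.id_coe, id_eq, hσ1, hiξ1, hSgtmul,
          TensorProduct.zero_tmul, TensorProduct.tmul_zero, zero_mul, mul_zero, add_zero,
          zero_add, hσσ x] at e1 e2
        have key : TensorProduct.map σ iξ (iΘ (x * y))
              + TensorProduct.map iξ LinearMap.id (iΘ (x * y)) + iΘ (iξ (x * y))
            = (TensorProduct.map σ iξ (iΘ x * ((1 : W) ⊗ₜ[k] y))
              + TensorProduct.map iξ LinearMap.id (iΘ x * ((1 : W) ⊗ₜ[k] y)))
            + (TensorProduct.map σ iξ ((σ x ⊗ₜ[k] (1 : W)) * iΘ y)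
              + TensorProduct.map iξ LinearMap.id ((σ x ⊗ₜ[k] (1 : W)) * iΘ y))
            + ((iΘ (iξ x) * ((1 : W) ⊗ₜ[k] y) + (σ (iξ x) ⊗ₜ[k] (1 : W)) * iΘ y)
              + (iΘ (σ x) * ((1 : W) ⊗ₜ[k] (iξ y)) + (σ (σ x) ⊗ₜ[k] (1 : W)) * iΘ (iξ y))) := by
          rw [hiΘL x y, hiξL x y, map_add iΘ, hiΘL (iξ x) y, hiΘL (σ x) (iξ y)]
          simp only [map_add]
          abel
        rw [key, e1, e2, hσσ x, hSgiΘ x, hσiξ x,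
          eq_neg_of_add_eq_zero_right ihx, eq_neg_of_add_eq_zero_right ihy]
        simp only [TensorProduct.neg_tmul, neg_mul, mul_neg, add_mul, mul_add, neg_add]
        abel
  -- conclusion
  apply LinearMap.ext
  intro w
  simp only [LinearMap.add_apply, LinearMap.comp_apply, LinearMap.zero_apply]
  calc iξ (dia (iΘ w)) + dia (iΘ (iξ w))
      = dia ((TensorProduct.map σ iξ (iΘ w) + TensorProduct.map iξ LinearMap.id (iΘ w))
          + iΘ (iξ w)) := by rw [map_add, hA (iΘ w)]
    _ = 0 := by rw [hT w, map_zero]
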